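/- Let f be a nonconstant map in C(Σ, M). Then the stabilizer of f under the ℂ*-reparametrization action, namely the set { a ∈ ℂ : a ≠ 0 and f ∘ g_a = f }, is a compact subset of ℂ (in particular it is bounded, closed in ℂ, and bounded away from 0). -/

import Mathlib

open OnePoint

/-- The reparametrization `g_a : Σ → Σ` of the Riemann sphere `Σ = OnePoint ℂ`
extending `z ↦ a · z` on `ℂ` and fixing the point at infinity. -/
noncomputable def gA (a : ℂ) (ha : a ≠ 0) : C(OnePoint ℂ, OnePoint ℂ) where
  toFun := OnePoint.map (fun z => a * z)
  continuous_toFun := (Homeomorph.onePointCongr (Homeomorph.mulLeft₀ a ha)).continuous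

lemma const_of_big {M : Type*} [MetricSpace M] [CompactSpace M]
    (f : C(OnePoint ℂ, M)) {a : ℂ} (hbig : 1 < ‖a‖)
    (h : ∀ z : ℂ, f ↑(a * z) = f ↑z) : ∀ x, f x = f ∞ := by
  have hiter : ∀ (n : ℕ) (z : ℂ), f ↑(a ^ n * z) = f ↑z := by
    intro n z
    induction n generalizing z with
    | zero => simp
    | succ n ih =>
      have : a ^ (n + 1) * z = a ^ n * (a * z) := by ring
      rw [this, ih, h]
  have hcoe : Continuous ((↑) : ℂ → OnePoint ℂ) := OnePoint.continuous_coe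
  have hne : ∀ z : ℂ, z ≠ 0 → f ↑z = f ∞ := by
    intro z hz
    have hnorm : Filter.Tendsto (fun n : ℕ => ‖a ^ n * z‖) Filter.atTop Filter.atTop := by
      simp only [norm_mul, norm_pow]
      exact (tendsto_pow_atTop_atTop_of_one_lt hbig).atTop_mul_const
        (norm_pos_iff.2 hz)
    have hco : Filter.Tendsto (fun n : ℕ => a ^ n * z) Filter.atTop (Filter.cocompact ℂ) := by
      rw [← Metric.cobounded_eq_cocompact, ← comap_norm_atTop, Filter.tendsto_comap_iff]
      exact hnorm
    have hinf : Filter.Tendsto (fun n : ℕ => ((a ^ n * z : ℂ) : OnePoint ℂ))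
        Filter.atTop (nhds (∞ : OnePoint ℂ)) := by
      refine OnePoint.tendsto_coe_infty.comp ?_
      rwa [Filter.coclosedCompact_eq_cocompact]
    have h1 : Filter.Tendsto (fun n : ℕ => f ↑(a ^ n * z)) Filter.atTop (nhds (f ∞)) :=
      (f.continuous.tendsto _).comp hinf
    have h2 : Filter.Tendsto (fun n : ℕ => f ↑(a ^ n * z)) Filter.atTop (nhds (f ↑z)) := by
      simp only [hiter]
      exact tendsto_const_nhds
    exact tendsto_nhds_unique h2 h1
  intro x
  cases x with
  | infty => rfl
  | coe z =>
    rcases eq_or_ne z 0 with rfl | hz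
    · -- use continuity at 0 along the punctured neighborhood
      have h1 : Filter.Tendsto (fun w : ℂ => f ↑w) (nhdsWithin 0 {0}ᶜ) (nhds (f ↑(0:ℂ))) :=
        ((f.continuous.comp hcoe).tendsto 0).mono_left nhdsWithin_le_nhds
      have h2 : Filter.Tendsto (fun w : ℂ => f ↑w) (nhdsWithin 0 {0}ᶜ) (nhds (f ∞)) := by
        refine Filter.Tendsto.congr' ?_ tendsto_const_nhds
        filter_upwards [self_mem_nhdsWithin] with w hw
        exact (hne w hw).symm
      exact tendsto_nhds_unique h1 h2
    · exact hne z hz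

lemma mem_sphere_of_stab {M : Type*} [MetricSpace M] [CompactSpace M]
    (f : C(OnePoint ℂ, M)) (hf : ∃ x y, f x ≠ f y) {a : ℂ} (ha : a ≠ 0)
    (h : ∀ z : ℂ, f ↑(a * z) = f ↑z) : ‖a‖ = 1 := by
  obtain ⟨x, y, hxy⟩ := hf
  by_contra hne
  rcases lt_or_gt_of_ne hne with hlt | hgt
  · have hbig : 1 < ‖a⁻¹‖ := by
      rw [norm_inv]
      exact (one_lt_inv₀ (norm_pos_iff.2 ha)).2 hlt
    have h' : ∀ z : ℂ, f ↑(a⁻¹ * z) = f ↑z := by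
      intro z
      have := h (a⁻¹ * z)
      rw [← mul_assoc, mul_inv_cancel₀ ha, one_mul] at this
      exact this.symm
    have := const_of_big f hbig h'
    exact hxy ((this x).trans (this y).symm)
  · have := const_of_big f hgt h
    exact hxy ((this x).trans (this y).symm)

/-- The stabilizer of a nonconstant continuous map `f : Σ → M` under the
`ℂ*`-reparametrization action is a compact subset of `ℂ`. -/
theorem stabilizer_compact {M : Type*} [MetricSpace M] [CompactSpace M]
    (f : C(OnePoint ℂ, M)) (hf : ∃ x y, f x ≠ f y) :
    IsCompact {a : ℂ | ∃ ha : a ≠ 0, f.comp (gA a ha) = f} := by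
  set S := {a : ℂ | ∃ ha : a ≠ 0, f.comp (gA a ha) = f} with hS
  have hpt : ∀ a ∈ S, ∀ z : ℂ, f ↑(a * z) = f ↑z := by
    rintro a ⟨ha, hcomp⟩ z
    have := DFunLike.congr_fun hcomp (↑z : OnePoint ℂ)
    exact this
  have hsub : S ⊆ Metric.sphere (0 : ℂ) 1 := by
    rintro a haS
    have h' := hpt a haS
    obtain ⟨ha, -⟩ := haS
    simpa [Complex.dist_eq] using mem_sphere_of_stab f hf ha h'
  refine (isCompact_sphere (0 : ℂ) 1).of_isClosed_subset ?_ hsub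
  refine IsSeqClosed.isClosed ?_
  intro u b hu hub
  have hb1 : ‖b‖ = 1 := by
    have h1 : Filter.Tendsto (fun n => ‖u n‖) Filter.atTop (nhds ‖b‖) :=
      (continuous_norm.tendsto b).comp hub
    have h2 : Filter.Tendsto (fun n => ‖u n‖) Filter.atTop (nhds 1) := by
      refine Filter.Tendsto.congr' ?_ tendsto_const_nhds
      filter_upwards with n
      exact (mem_sphere_of_stab f hf (hu n).1 (hpt _ (hu n))).symm
    exact tendsto_nhds_unique h1 h2
  have hb : b ≠ 0 := by
    intro h0; rw [h0] at hb1; simp at hb1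
  refine ⟨hb, ?_⟩
  ext x
  cases x with
  | infty => rfl
  | coe z =>
    have hcont : Continuous fun c : ℂ => f ↑(c * z) :=
      (f.continuous.comp OnePoint.continuous_coe).comp (continuous_id.mul continuous_const)
    have h1 : Filter.Tendsto (fun n => f ↑(u n * z)) Filter.atTop (nhds (f ↑(b * z))) :=
      (hcont.tendsto b).comp hub
    have h2 : Filter.Tendsto (fun n => f ↑(u n * z)) Filter.atTop (nhds (f ↑z)) := by
      refine Filter.Tendsto.congr' ?_ tendsto_const_nhds
      filter_upwards with n
      exact (hpt _ (hu n) z).symm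
    have := tendsto_nhds_unique h1 h2
    exact this
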